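/- (Weber curve) For λ > 0 define F_0(λ) = −(3/4)λ² + (1/2)λ²·log λ, F_1(λ) = −(1/12)·log λ, and F_g(λ) = (B_{2g}/(2g(2g−2)))·λ^{2−2g} for g ≥ 2. Then for every integer n ≥ 1 and every λ > 0, Σ_{k=1}^{n} (2/(2k)!) · F_{n−k}^{(2k)}(λ) = log λ if n = 1, and = 0 if n ≥ 2. (That is, the free energy F(λ;ℏ) = Σ_{g≥0} ℏ^{2g−2} F_g(λ) of the Weber spectral curve y² = x²/4 − λ satisfies the three-term difference equation F(λ+ℏ) − 2F(λ) + F(λ−ℏ) = log λ order by order in ℏ.) -/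

import Mathlib

open Finset

/- ### Auxiliary Bernoulli-number identities -/

lemma weber_bern_odd_zero {m : ℕ} (h : Odd m) (h1 : 1 < m) : bernoulli m = 0 := by
  rw [bernoulli_eq_bernoulli'_of_ne_one (by omega)]
  exact bernoulli'_eq_zero_of_odd h h1

lemma weber_bern_two : bernoulli 2 = 1/6 := by
  rw [bernoulli_eq_bernoulli'_of_ne_one (by omega)]; exact bernoulli'_two

lemma weber_aux1 (N : ℕ) :
    ∑ j ∈ range (2*N+3), ((2*N+3).choose j : ℚ) * bernoulli (j+1) = 0 := by
  have pascal : ∀ j : ℕ, ((2*N+3).choose j : ℚ)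
      = ((2*N+4).choose (j+1) : ℚ) - ((2*N+3).choose (j+1) : ℚ) := by
    intro j
    have : (2*N+4).choose (j+1) = (2*N+3).choose j + (2*N+3).choose (j+1) := by
      show (2*N+3+1).choose (j+1) = _
      rw [Nat.choose_succ_succ]
    rw [this]; push_cast; ring
  have e1 : ∑ j ∈ range (2*N+3), ((2*N+4).choose (j+1) : ℚ) * bernoulli (j+1) = -1 := by
    have h1 := sum_bernoulli (2*N+4)
    rw [show 2*N+4 = 2*N+3+1 by omega, Finset.sum_range_succ'] at h1
    simp at h1
    linarith
  have e3 : ∑ j ∈ range (2*N+3), ((2*N+3).choose (j+1) : ℚ) * bernoulli (j+1) = -1 := by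
    have t1 : ∑ i ∈ range (2*N+3+1), ((2*N+3).choose i : ℚ) * bernoulli i = 0 := by
      rw [Finset.sum_range_succ, sum_bernoulli,
        weber_bern_odd_zero ⟨N+1, by ring⟩ (by omega)]
      norm_num
      omega
    rw [Finset.sum_range_succ'] at t1
    simp at t1
    linarith
  calc ∑ j ∈ range (2*N+3), ((2*N+3).choose j : ℚ) * bernoulli (j+1)
      = (∑ j ∈ range (2*N+3), ((2*N+4).choose (j+1) : ℚ) * bernoulli (j+1))
        - ∑ j ∈ range (2*N+3), ((2*N+3).choose (j+1) : ℚ) * bernoulli (j+1) := by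
        rw [← Finset.sum_sub_distrib]
        exact Finset.sum_congr rfl fun j _ => by rw [pascal j]; ring
    _ = 0 := by rw [e1, e3]; ring

/-- The key Bernoulli identity: `∑_{g=1}^{N+1} (2g-1) C(2N+4, 2g) B_{2g} = 1`. -/
lemma weber_bid (N : ℕ) :
    ∑ g ∈ Icc 1 (N+1), ((2*g:ℚ) - 1) * ((2*N+4).choose (2*g)) * bernoulli (2*g) = 1 := by
  set f : ℕ → ℚ := fun i => ((i:ℚ)-1) * ((2*N+4).choose i) * bernoulli i with hf
  have claim1 : ∑ i ∈ range (2*N+4), f i = 0 := by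
    have hsplit : ∑ i ∈ range (2*N+4), f i
        = (∑ i ∈ range (2*N+4), (i:ℚ) * ((2*N+4).choose i) * bernoulli i)
          - ∑ i ∈ range (2*N+4), ((2*N+4).choose i : ℚ) * bernoulli i := by
      rw [← Finset.sum_sub_distrib]
      exact Finset.sum_congr rfl fun i _ => by simp only [hf]; ring
    have h0 : ∑ i ∈ range (2*N+4), ((2*N+4).choose i : ℚ) * bernoulli i = 0 := by
      rw [sum_bernoulli]; norm_num; omega
    have h1 : ∑ i ∈ range (2*N+4), (i:ℚ) * ((2*N+4).choose i) * bernoulli i = 0 := by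
      rw [show 2*N+4 = 2*N+3+1 by omega, Finset.sum_range_succ']
      have key : ∀ j ∈ range (2*N+3), (((j+1:ℕ)):ℚ) * ((2*N+3+1).choose (j+1)) * bernoulli (j+1)
          = (2*N+4 : ℚ) * (((2*N+3).choose j : ℚ) * bernoulli (j+1)) := by
        intro j _
        have h := Nat.add_one_mul_choose_eq (2*N+3) j
        have hq : ((2*N+4 : ℕ) : ℚ) * ((2*N+3).choose j : ℚ)
            = ((2*N+4).choose (j+1) : ℚ) * ((j:ℚ)+1) := by
          exact_mod_cast congrArg (Nat.cast (R := ℚ)) h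
        rw [show 2*N+3+1 = 2*N+4 by omega]
        push_cast at hq ⊢
        linear_combination (-(bernoulli (j+1))) * hq
      rw [Finset.sum_congr rfl key, ← Finset.mul_sum, weber_aux1]
      norm_num
    rw [hsplit, h0, h1]; ring
  have claim2 : ∑ i ∈ range (2*N+4), f i = f 0 + ∑ g ∈ Icc 1 (N+1), f (2*g) := by
    have hsub : insert 0 ((Icc 1 (N+1)).image (fun g => 2*g)) ⊆ range (2*N+4) := by
      intro i hi
      simp only [Finset.mem_insert, Finset.mem_image, Finset.mem_Icc] at hi
      simp only [Finset.mem_range]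
      rcases hi with h | ⟨g, ⟨h1, h2⟩, rfl⟩ <;> omega
    rw [← Finset.sum_subset hsub]
    · rw [Finset.sum_insert, Finset.sum_image]
      · intro a _ b _ h; simp only at h; omega
      · simp only [Finset.mem_image, Finset.mem_Icc]
        rintro ⟨g, ⟨h1, _⟩, h⟩; omega
    · intro i hi hni
      simp only [Finset.mem_insert, Finset.mem_image, Finset.mem_Icc, not_or, not_exists] at hni
      simp only [Finset.mem_range] at hi
      obtain ⟨hne, hno⟩ := hni
      rcases Nat.even_or_odd i with he | ho
      · obtain ⟨g, rfl⟩ := he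
        exfalso; exact hno g ⟨⟨by omega, by omega⟩, by omega⟩
      · rcases Nat.lt_or_ge i 2 with h2 | h2
        · interval_cases i
          · omega
          · simp [hf]
        · have : bernoulli i = 0 := weber_bern_odd_zero ho (by omega)
          simp [hf, this]
  have hf0 : f 0 = -1 := by simp [hf]
  have hs : ∑ g ∈ Icc 1 (N+1), f (2*g) = 1 := by
    have := claim1; rw [claim2, hf0] at this; linarith
  have heq : ∑ g ∈ Icc 1 (N+1), ((2*g:ℚ) - 1) * ((2*N+4).choose (2*g)) * bernoulli (2*g)
      = ∑ g ∈ Icc 1 (N+1), f (2*g) :=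
    Finset.sum_congr rfl fun g _ => by simp only [hf]; push_cast; ring
  rw [heq, hs]

/- ### Analytic lemmas -/

lemma weber_derivCongrIoi {f g : ℝ → ℝ} (h : ∀ x ∈ Set.Ioi (0:ℝ), f x = g x) {l : ℝ}
    (hl : 0 < l) : deriv f l = deriv g l :=
  Filter.EventuallyEq.deriv_eq (Filter.eventuallyEq_of_mem (Ioi_mem_nhds hl) h)

/-- Iterated derivatives of `log` on `(0,∞)`. -/
lemma weber_logIterDeriv (m : ℕ) : ∀ l : ℝ, 0 < l →
    iteratedDeriv (m+1) Real.log l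
      = (-1)^m * (m.factorial : ℝ) * l ^ (-1 - (m:ℤ)) := by
  induction m with
  | zero =>
    intro l hl
    simp [iteratedDeriv_one, Real.deriv_log, zpow_neg]
  | succ m ih =>
    intro l hl
    rw [iteratedDeriv_succ, weber_derivCongrIoi (fun x hx => ih x hx) hl]
    have : deriv (fun x : ℝ => (-1)^m * (m.factorial : ℝ) * x ^ (-1 - (m:ℤ))) l
        = (-1)^m * (m.factorial : ℝ) * ((-1 - (m:ℤ)) * l ^ (-1 - (m:ℤ) - 1)) := by
      rw [deriv_const_mul_field, deriv_zpow]; push_cast; ring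
    rw [this]
    rw [show (-1 - (m:ℤ) - 1) = -1 - ((m+1 : ℕ) : ℤ) by push_cast; ring]
    rw [Nat.factorial_succ]
    push_cast
    ring

lemma weber_logStep (d : ℝ) (m : ℕ) {l : ℝ} (hl : 0 < l) :
    deriv (fun x => d * iteratedDeriv m Real.log x) l
      = d * iteratedDeriv (m+1) Real.log l := by
  cases m with
  | zero =>
    simp only [iteratedDeriv_zero]
    rw [deriv_const_mul_field, Real.deriv_log, show (0+1)=1 from rfl, iteratedDeriv_one,
      Real.deriv_log]
  | succ m =>
    rw [weber_derivCongrIoi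
      (g := fun x => d * ((-1)^m * (m.factorial : ℝ) * x ^ (-1 - (m:ℤ))))
      (fun x hx => by rw [weber_logIterDeriv m x hx]) hl]
    have h1 : deriv (fun x : ℝ => d * ((-1)^m * (m.factorial : ℝ) * x ^ (-1 - (m:ℤ)))) l
        = d * ((-1)^m * (m.factorial : ℝ) * ((-1 - (m:ℤ)) * l ^ (-1 - (m:ℤ) - 1))) := by
      simp only [← mul_assoc]
      rw [deriv_const_mul_field, deriv_zpow]; push_cast; ring
    rw [h1, weber_logIterDeriv (m+1) l hl]
    rw [show (-1 - (m:ℤ) - 1) = -1 - ((m+1 : ℕ) : ℤ) by push_cast; ring]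
    rw [Nat.factorial_succ]
    push_cast
    ring

/-- Normalized coefficients: `F_g^{(j+2)} = dW g · log^{(j+2g)}` on `(0,∞)`. -/
noncomputable def dW (g : ℕ) : ℝ :=
  if g = 0 then 1 else if g = 1 then -(1/12)
  else -((bernoulli (2*g) : ℝ) / (2*(g:ℝ)*(2*(g:ℝ)-2)) / ((2*g-3).factorial : ℝ))

section
variable (F : ℕ → ℝ → ℝ)
    (hF0 : ∀ l : ℝ, 0 < l →
      F 0 l = -(3 / 4) * l ^ 2 + 1 / 2 * l ^ 2 * Real.log l)
    (hF1 : ∀ l : ℝ, 0 < l → F 1 l = -(1 / 12) * Real.log l)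
    (hFg : ∀ g : ℕ, 2 ≤ g → ∀ l : ℝ, 0 < l →
      F g l = (bernoulli (2 * g) : ℝ) / (2 * (g : ℝ) * (2 * (g : ℝ) - 2))
                * l ^ (2 - 2 * (g : ℤ)))

include hF0 in
lemma weber_keyF0base : ∀ l : ℝ, 0 < l → iteratedDeriv 2 (F 0) l = Real.log l := by
  have d1 : ∀ x ∈ Set.Ioi (0:ℝ), iteratedDeriv 1 (F 0) x = -x + x * Real.log x := by
    intro x hx
    have hx0 : (0:ℝ) < x := hx
    have hxne : x ≠ 0 := ne_of_gt hx0
    rw [iteratedDeriv_one, weber_derivCongrIoi hF0 hx0]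
    have hsq : HasDerivAt (fun y : ℝ => y^2) (2*x) x := by
      simpa using hasDerivAt_pow 2 x
    have hlog := Real.hasDerivAt_log hxne
    have h2 : HasDerivAt (fun y : ℝ => 1/2*y^2*Real.log y)
        (1/2*(2*x)*Real.log x + 1/2*x^2*x⁻¹) x := (hsq.const_mul (1/2)).mul hlog
    have h3 : HasDerivAt (fun y : ℝ => -(3/4)*y^2) (-(3/4)*(2*x)) x := hsq.const_mul _
    have h4 : HasDerivAt (fun y : ℝ => -(3/4)*y^2 + 1/2*y^2*Real.log y)
        (-(3/4)*(2*x) + (1/2*(2*x)*Real.log x + 1/2*x^2*x⁻¹)) x := h3.add h2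
    rw [h4.deriv]
    field_simp
    ring
  intro l hl
  rw [iteratedDeriv_succ, weber_derivCongrIoi d1 hl]
  have hlne : l ≠ 0 := ne_of_gt hl
  have h1 : HasDerivAt (fun x : ℝ => -x + x * Real.log x)
      (-1 + (1 * Real.log l + l * l⁻¹)) l :=
    (hasDerivAt_id l).neg.add ((hasDerivAt_id l).mul (Real.hasDerivAt_log hlne))
  rw [h1.deriv, mul_inv_cancel₀ hlne]
  ring

include hF1 in
lemma weber_keyF1base : ∀ l : ℝ, 0 < l →
    iteratedDeriv 2 (F 1) l = dW 1 * iteratedDeriv 2 Real.log l := by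
  have d1 : ∀ x ∈ Set.Ioi (0:ℝ),
      iteratedDeriv 1 (F 1) x = -(1/12) * iteratedDeriv 1 Real.log x := by
    intro x hx
    have hx0 : (0:ℝ) < x := hx
    rw [iteratedDeriv_one, weber_derivCongrIoi hF1 hx0, iteratedDeriv_one,
      deriv_const_mul_field]
  intro l hl
  rw [iteratedDeriv_succ, weber_derivCongrIoi d1 hl, weber_logStep _ _ hl]
  norm_num [dW]

include hFg in
lemma weber_keyFgbase (G : ℕ) : ∀ l : ℝ, 0 < l →
    iteratedDeriv 2 (F (G+2)) l = dW (G+2) * iteratedDeriv (2*(G+2)) Real.log l := by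
  set c : ℝ := (bernoulli (2 * (G+2)) : ℝ)
      / (2 * ((G+2:ℕ) : ℝ) * (2 * ((G+2:ℕ) : ℝ) - 2)) with hc
  set e : ℤ := 2 - 2 * ((G+2:ℕ) : ℤ) with he
  have d1 : ∀ x ∈ Set.Ioi (0:ℝ),
      iteratedDeriv 1 (F (G+2)) x = c * (e:ℝ) * x ^ (e - 1) := by
    intro x hx
    have hx0 : (0:ℝ) < x := hx
    rw [iteratedDeriv_one, weber_derivCongrIoi (hFg (G+2) (by omega)) hx0,
      deriv_const_mul_field, deriv_zpow]
    ring
  intro l hl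
  rw [iteratedDeriv_succ, weber_derivCongrIoi d1 hl]
  have h1 : deriv (fun x : ℝ => c * (e:ℝ) * x ^ (e-1)) l
      = c * (e:ℝ) * (((e:ℝ)-1) * l ^ (e-1-1)) := by
    rw [deriv_const_mul_field, deriv_zpow]; push_cast; ring
  rw [h1]
  rw [show 2*(G+2) = (2*G+3)+1 by omega, weber_logIterDeriv (2*G+3) l hl]
  have hdw : dW (G+2) = -(c / ((2*G+1).factorial : ℝ)) := by
    rw [dW, if_neg (by omega), if_neg (by omega), hc,
      show 2*(G+2)-3 = 2*G+1 by omega]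
  rw [hdw, show (e-1-1 : ℤ) = -1 - ((2*G+3:ℕ):ℤ) by rw [he]; push_cast; ring]
  rw [show (-1:ℝ)^(2*G+3) = -1 by exact Odd.neg_one_pow ⟨G+1, by ring⟩]
  have hfacn : (2*G+3).factorial = (2*G+3)*((2*G+2)*(2*G+1).factorial) := by
    rw [show 2*G+3 = 2*G+1+1+1 by omega, Nat.factorial_succ, Nat.factorial_succ]
  rw [hfacn]
  have hfne : ((2*G+1).factorial : ℝ) ≠ 0 := by
    exact_mod_cast (2*G+1).factorial_ne_zero
  rw [he]
  push_cast
  field_simp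
  ring

include hF0 hF1 hFg in
lemma weber_keyF : ∀ (j g : ℕ), ∀ l : ℝ, 0 < l →
    iteratedDeriv (j+2) (F g) l = dW g * iteratedDeriv (j + 2*g) Real.log l := by
  intro j
  induction j with
  | zero =>
    intro g l hl
    match g with
    | 0 => simpa [dW] using weber_keyF0base F hF0 l hl
    | 1 => simpa using weber_keyF1base F hF1 l hl
    | (G+2) => simpa using weber_keyFgbase F hFg G l hl
  | succ j ih =>
    intro g l hl
    rw [show j+1+2 = (j+2)+1 by omega, iteratedDeriv_succ,
      weber_derivCongrIoi (g := fun x => dW g * iteratedDeriv (j + 2*g) Real.log x)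
        (fun x hx => ih g x hx) hl,
      weber_logStep _ _ hl, show j+1+2*g = (j+2*g)+1 by omega]

end

/- ### The coefficient identity in ℝ -/

lemma weber_term_eq (N g : ℕ) (h1 : 1 ≤ g) (h2 : g ≤ N+1) :
    2/((2*(N+2-g)).factorial : ℝ) * dW g
      = (-(2/((2*N+4).factorial : ℝ)))
          * ((2*(g:ℝ) - 1) * ((2*N+4).choose (2*g) : ℝ) * (bernoulli (2*g) : ℝ)) := by
  have hcf : (2*N+4).choose (2*g) * (2*g).factorial * (2*(N+2-g)).factorial
      = (2*N+4).factorial := by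
    have h := Nat.choose_mul_factorial_mul_factorial (show 2*g ≤ 2*N+4 by omega)
    rwa [show 2*N+4 - 2*g = 2*(N+2-g) by omega] at h
  have hcfR : ((2*N+4).factorial : ℝ)
      = ((2*N+4).choose (2*g) : ℝ) * ((2*g).factorial : ℝ) * ((2*(N+2-g)).factorial : ℝ) := by
    exact_mod_cast (congrArg (Nat.cast (R := ℝ)) hcf).symm
  have hCne : ((2*N+4).choose (2*g) : ℝ) ≠ 0 := by
    have := Nat.choose_pos (show 2*g ≤ 2*N+4 by omega)
    positivity
  have hf1 : ((2*(N+2-g)).factorial : ℝ) ≠ 0 := by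
    exact_mod_cast (2*(N+2-g)).factorial_ne_zero
  match g, h1 with
  | 1, _ =>
    rw [weber_bern_two]
    rw [dW, if_neg (by omega), if_pos rfl]
    rw [hcfR]
    have h21 : (((2*1).factorial : ℕ) : ℝ) = 2 := by norm_num [Nat.factorial]
    rw [h21]
    push_cast
    field_simp
    ring
  | (G+2), _ =>
    have hdw : dW (G+2)
        = -((bernoulli (2*(G+2)) : ℝ)
            / (2*((G+2:ℕ):ℝ)*(2*((G+2:ℕ):ℝ)-2)) / ((2*G+1).factorial : ℝ)) := by
      rw [dW, if_neg (by omega), if_neg (by omega), show 2*(G+2)-3 = 2*G+1 by omega]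
    have hfacn : (2*(G+2)).factorial
        = (2*G+4)*((2*G+3)*((2*G+2)*(2*G+1).factorial)) := by
      rw [show 2*(G+2) = 2*G+1+1+1+1 by omega, Nat.factorial_succ, Nat.factorial_succ,
        Nat.factorial_succ]
    rw [hdw, hcfR, hfacn]
    have hfne : ((2*G+1).factorial : ℝ) ≠ 0 := by
      exact_mod_cast (2*G+1).factorial_ne_zero
    have hd1 : ((G:ℝ)+2) ≠ 0 := by positivity
    have hd2 : (2*((G:ℝ)+2)-2) ≠ 0 := by
      have : (0:ℝ) ≤ (G:ℝ) := Nat.cast_nonneg G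
      nlinarith
    have hd3 : (1 + (G:ℝ)) ≠ 0 := by positivity
    push_cast at hd2 ⊢
    field_simp
    ring_nf
    field_simp
    ring

/- ### Main theorem -/

/-- (Weber curve) The free energy `F(λ;ℏ) = Σ_{g≥0} ℏ^{2g−2} F_g(λ)` with
`F_0 = −(3/4)λ² + (1/2)λ²log λ`, `F_1 = −(1/12)log λ`,
`F_g = (B_{2g}/(2g(2g−2)))λ^{2−2g}` (g ≥ 2) satisfies
`F(λ+ℏ) − 2F(λ) + F(λ−ℏ) = log λ` order by order in `ℏ`. -/
theorem stmt12 (F : ℕ → ℝ → ℝ)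
    (hF0 : ∀ l : ℝ, 0 < l →
      F 0 l = -(3 / 4) * l ^ 2 + 1 / 2 * l ^ 2 * Real.log l)
    (hF1 : ∀ l : ℝ, 0 < l → F 1 l = -(1 / 12) * Real.log l)
    (hFg : ∀ g : ℕ, 2 ≤ g → ∀ l : ℝ, 0 < l →
      F g l = (bernoulli (2 * g) : ℝ) / (2 * (g : ℝ) * (2 * (g : ℝ) - 2))
                * l ^ (2 - 2 * (g : ℤ)))
    (n : ℕ) (hn : 1 ≤ n) (l : ℝ) (hl : 0 < l) :
    ∑ k ∈ Finset.Icc 1 n,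
        2 / (Nat.factorial (2 * k) : ℝ) * iteratedDeriv (2 * k) (F (n - k)) l
      = if n = 1 then Real.log l else 0 := by
  have hterm : ∀ k ∈ Finset.Icc 1 n,
      2 / (Nat.factorial (2 * k) : ℝ) * iteratedDeriv (2 * k) (F (n - k)) l
        = (2 / (Nat.factorial (2 * k) : ℝ) * dW (n - k))
            * iteratedDeriv (2*(n-1)) Real.log l := by
    intro k hk
    simp only [Finset.mem_Icc] at hk
    rw [show 2*k = 2*(k-1)+2 by omega,
      weber_keyF F hF0 hF1 hFg (2*(k-1)) (n-k) l hl,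
      show 2*(k-1) + 2*(n-k) = 2*(n-1) by omega, mul_assoc]
  rw [Finset.sum_congr rfl hterm, ← Finset.sum_mul]
  rcases Nat.lt_or_ge n 2 with h2 | h2
  · have hn1 : n = 1 := by omega
    subst hn1
    rw [if_pos rfl]
    simp only [Finset.Icc_self, Finset.sum_singleton]
    norm_num [dW, iteratedDeriv_zero]
  · obtain ⟨N, rfl⟩ : ∃ N, n = N + 2 := ⟨n - 2, by omega⟩
    rw [if_neg (by omega)]
    have hS : ∑ k ∈ Finset.Icc 1 (N+2),
        2 / (Nat.factorial (2*k) : ℝ) * dW (N+2-k) = 0 := by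
      rw [show N+2 = N+1+1 by omega, Finset.sum_Icc_succ_top (by omega)]
      have hre : ∑ k ∈ Finset.Icc 1 (N+1),
          2 / (Nat.factorial (2*k) : ℝ) * dW (N+1+1-k)
          = ∑ g ∈ Finset.Icc 1 (N+1),
              2 / (Nat.factorial (2*(N+2-g)) : ℝ) * dW g := by
        refine Finset.sum_nbij' (fun k => N+2-k) (fun g => N+2-g) ?_ ?_ ?_ ?_ ?_
        · intro a ha; simp only [Finset.mem_Icc] at *; omega
        · intro a ha; simp only [Finset.mem_Icc] at *; omega
        · intro a ha; simp only [Finset.mem_Icc] at *; omega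
        · intro a ha; simp only [Finset.mem_Icc] at *; omega
        · intro a ha; simp only [Finset.mem_Icc] at ha
          rw [show N+1+1-a = N+2-a by omega, show N+2-(N+2-a) = a by omega]
      rw [hre]
      have hterms : ∀ g ∈ Finset.Icc 1 (N+1),
          2 / (Nat.factorial (2*(N+2-g)) : ℝ) * dW g
            = (-(2/((2*N+4).factorial : ℝ)))
                * ((2*(g:ℝ) - 1) * ((2*N+4).choose (2*g) : ℝ) * (bernoulli (2*g) : ℝ)) := by
        intro g hg
        simp only [Finset.mem_Icc] at hg
        exact weber_term_eq N g hg.1 hg.2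
      rw [Finset.sum_congr rfl hterms, ← Finset.mul_sum]
      have hbidR : ∑ g ∈ Finset.Icc 1 (N+1),
          (2*(g:ℝ) - 1) * ((2*N+4).choose (2*g) : ℝ) * (bernoulli (2*g) : ℝ) = 1 := by
        exact_mod_cast congrArg (Rat.cast (K := ℝ)) (weber_bid N)
      rw [hbidR, mul_one]
      have hdw0 : dW (N+1+1-(N+1+1)) = 1 := by
        rw [show N+1+1-(N+1+1) = 0 by omega, dW, if_pos rfl]
      rw [hdw0, show 2*(N+1+1) = 2*N+4 by omega]
      ring
    rw [hS, zero_mul]
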